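/- In the full-correlation n-cycle scenario, a vertex \(\tau \in \{-1,1\}^{2n}\) is local (lies in the convex hull of the deterministic points) if and only if \(\prod_{i=1}^{2n} \tau_i = 1\), i.e., the number of coordinates equal to −1 is even. -/

import Mathlib

namespace Stmt15

/-- The deterministic full-correlation points of the n-cycle scenario: for sign
assignments a, b ∈ {-1,1}ⁿ, the vector of correlators (a_i b_i)_i and (a_i b_{i+1})_i
on the 2n edges of the cycle. -/
def Det (n : ℕ) [NeZero n] : Set (Fin n ⊕ Fin n → ℝ) :=
  {τ | ∃ a b : Fin n → ℝ,
    (∀ i, a i = 1 ∨ a i = -1) ∧ (∀ j, b j = 1 ∨ b j = -1) ∧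
    (∀ i, τ (Sum.inl i) = a i * b i) ∧ (∀ i, τ (Sum.inr i) = a i * b (i + 1))}

private lemma pm_mul {x y : ℝ} (hx : x = 1 ∨ x = -1) (hy : y = 1 ∨ y = -1) :
    x * y = 1 ∨ x * y = -1 := by
  rcases hx with h | h <;> rcases hy with h' | h' <;> simp [h, h']

private lemma pm_sq {x : ℝ} (hx : x = 1 ∨ x = -1) : x * x = 1 := by
  rcases hx with h | h <;> simp [h]

private lemma prod_pm {α : Type*} (s : Finset α) (f : α → ℝ)
    (h : ∀ i ∈ s, f i = 1 ∨ f i = -1) : (∏ i ∈ s, f i) = 1 ∨ (∏ i ∈ s, f i) = -1 := by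
  classical
  induction s using Finset.induction with
  | empty => simp
  | @insert a s hx ih =>
    rw [Finset.prod_insert hx]
    exact pm_mul (h a (Finset.mem_insert_self a s))
      (ih fun i hi => h i (Finset.mem_insert_of_mem hi))

private lemma prod_eq_one_of_mem_Det {n : ℕ} [NeZero n] {τ : Fin n ⊕ Fin n → ℝ}
    (h : τ ∈ Det n) : ∏ e, τ e = 1 := by
  obtain ⟨a, b, ha, hb, h1, h2⟩ := h
  rw [Fintype.prod_sum_type]
  simp only [h1, h2]
  rw [Finset.prod_mul_distrib, Finset.prod_mul_distrib]
  have hshift : (∏ i, b (i + 1)) = ∏ i, b i :=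
    Fintype.prod_equiv (Equiv.addRight (1 : Fin n)) _ _ (fun i => rfl)
  rw [hshift]
  have ha2 : (∏ i, a i) * (∏ i, a i) = 1 := by
    rw [← Finset.prod_mul_distrib]
    exact Finset.prod_eq_one fun i _ => pm_sq (ha i)
  have hb2 : (∏ i, b i) * (∏ i, b i) = 1 := by
    rw [← Finset.prod_mul_distrib]
    exact Finset.prod_eq_one fun i _ => pm_sq (hb i)
  calc (∏ i, a i) * (∏ i, b i) * ((∏ i, a i) * (∏ i, b i))
      = ((∏ i, a i) * (∏ i, a i)) * ((∏ i, b i) * (∏ i, b i)) := by ring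
    _ = 1 := by rw [ha2, hb2, one_mul]

private lemma mem_Det_of_prod {n : ℕ} [NeZero n] {τ : Fin n ⊕ Fin n → ℝ}
    (hτ : ∀ e, τ e = 1 ∨ τ e = -1) (h : ∏ e, τ e = 1) : τ ∈ Det n := by
  classical
  set c : Fin n → ℝ := fun i => τ (Sum.inl i) * τ (Sum.inr i) with hc_def
  have hc : ∀ i, c i = 1 ∨ c i = -1 := fun i => pm_mul (hτ _) (hτ _)
  set b : Fin n → ℝ := fun k => ∏ i ∈ Finset.Iio k, c i with hb_def
  have hb : ∀ k, b k = 1 ∨ b k = -1 := fun k => prod_pm _ _ (fun i _ => hc i)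
  have hprodc : ∏ i, c i = 1 := by
    rw [Fintype.prod_sum_type] at h
    rw [hc_def]
    rw [Finset.prod_mul_distrib]
    exact h
  have hIic : ∀ i : Fin n, (∏ j ∈ Finset.Iic i, c j) = c i * b i := by
    intro i
    rw [← Finset.Iio_insert, Finset.prod_insert (by simp)]
  have key : ∀ i : Fin n, b (i + 1) = c i * b i := by
    intro i
    rcases lt_or_eq_of_le (Nat.succ_le_of_lt i.isLt) with hlt | heq
    · have hval : ((i + 1 : Fin n) : ℕ) = (i : ℕ) + 1 := by
        have h2 : 2 ≤ n := by omega
        have : ((i + 1 : Fin n) : ℕ) = ((i : ℕ) + 1 % n) % n := by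
          rw [Fin.add_def, Fin.val_one']
        rw [this, Nat.mod_eq_of_lt (show 1 < n by omega), Nat.mod_eq_of_lt (by omega)]
      have : Finset.Iio (i + 1) = Finset.Iic i := by
        ext j
        simp only [Finset.mem_Iio, Finset.mem_Iic, Fin.lt_iff_val_lt_val,
          Fin.le_iff_val_le_val, hval]
        omega
      rw [hb_def]
      simp only
      rw [this, hIic]
    · have h0 : (i + 1 : Fin n) = 0 := by
        apply Fin.ext
        have h2 : (i : ℕ) + 1 = n := heq
        have : ((i + 1 : Fin n) : ℕ) = ((i : ℕ) + 1 % n) % n := by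
          rw [Fin.add_def, Fin.val_one']
        rw [this]
        have hn1 : 1 % n ≤ 1 := Nat.mod_le 1 n
        rcases Nat.lt_or_ge 1 n with hn | hn
        · rw [Nat.mod_eq_of_lt hn, h2, Nat.mod_self]
          rfl
        · interval_cases n
          · exact absurd rfl (NeZero.ne 0)
          · simp
      have hIio0 : Finset.Iio (0 : Fin n) = ∅ := by
        ext j; simp
      have huniv : Finset.Iic i = Finset.univ := by
        ext j
        simp only [Finset.mem_Iic, Finset.mem_univ, iff_true, Fin.le_iff_val_le_val]
        omega
      have : c i * b i = 1 := by
        rw [← hIic, huniv, hprodc]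
      rw [h0, this, hb_def]
      simp [hIio0]
  refine ⟨fun i => τ (Sum.inl i) * b i, b, fun i => pm_mul (hτ _) (hb i), hb, ?_, ?_⟩
  · intro i
    rw [mul_assoc, pm_sq (hb i), mul_one]
  · intro i
    rw [key i]
    have : τ (Sum.inl i) * b i * (c i * b i) = τ (Sum.inl i) * c i * (b i * b i) := by ring
    rw [this, pm_sq (hb i), mul_one, hc_def]
    simp only
    rw [← mul_assoc, pm_sq (hτ (Sum.inl i)), one_mul]

open Classical in
/-- A vertex τ ∈ {-1,1}^(2n) of the full-correlation n-cycle scenario is local (lies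
in the convex hull of the deterministic points) iff the product of its coordinates is
1, i.e. iff the number of its coordinates equal to -1 is even. -/
theorem cycle_vertex_local_iff (n : ℕ) [NeZero n] (τ : Fin n ⊕ Fin n → ℝ)
    (hτ : ∀ e, τ e = 1 ∨ τ e = -1) :
    (τ ∈ convexHull ℝ (Det n) ↔ ∏ e, τ e = 1) ∧
    ((∏ e, τ e = 1) ↔ Even ((Finset.univ.filter (fun e : Fin n ⊕ Fin n => τ e = -1)).card)) := by
  constructor
  · constructor
    · intro h
      rw [convexHull_eq] at h
      obtain ⟨ι, t, w, z, hw0, hw1, hz, hcm⟩ := h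
      obtain ⟨i₀, hi₀t, hi₀⟩ := Finset.exists_ne_zero_of_sum_ne_zero
        (f := w) (by rw [hw1]; norm_num)
      have hcoord : ∀ e, τ e = ∑ i ∈ t, w i * z i e := by
        intro e
        rw [← hcm, Finset.centerMass_eq_of_sum_1 _ _ hw1]
        simp [Finset.sum_apply]
      have hze : ∀ i ∈ t, ∀ e, z i e = 1 ∨ z i e = -1 := by
        intro i hi e
        obtain ⟨a, b, ha, hb, h1, h2⟩ := hz i hi
        cases e with
        | inl j => rw [h1]; exact pm_mul (ha j) (hb j)
        | inr j => rw [h2]; exact pm_mul (ha j) (hb (j + 1))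
      have key : ∀ e, z i₀ e = τ e := by
        intro e
        have hsum : ∑ i ∈ t, w i * (1 - τ e * z i e) = 0 := by
          have h1 : ∑ i ∈ t, w i * (τ e * z i e) = τ e * ∑ i ∈ t, w i * z i e := by
            rw [Finset.mul_sum]
            exact Finset.sum_congr rfl fun i _ => by ring
          simp only [mul_sub, mul_one]
          rw [Finset.sum_sub_distrib, hw1, h1, ← hcoord e, pm_sq (hτ e), sub_self]
        have hnonneg : ∀ i ∈ t, 0 ≤ w i * (1 - τ e * z i e) := by
          intro i hi
          apply mul_nonneg (hw0 i hi)
          rcases hτ e with h | h <;> rcases hze i hi e with h' | h' <;>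
            rw [h, h'] <;> norm_num
        have h0 := (Finset.sum_eq_zero_iff_of_nonneg hnonneg).mp hsum i₀ hi₀t
        have h1 : 1 - τ e * z i₀ e = 0 := by
          rcases mul_eq_zero.mp h0 with h | h
          · exact absurd h hi₀
          · exact h
        rcases hτ e with h | h <;> rcases hze i₀ hi₀t e with h' | h' <;>
          simp only [h, h'] at h1 ⊢ <;> norm_num at h1
      have : τ ∈ Det n := by
        have : τ = z i₀ := funext fun e => (key e).symm
        rw [this]
        exact hz i₀ hi₀t
      exact prod_eq_one_of_mem_Det this
    · intro h
      exact subset_convexHull ℝ (Det n) (mem_Det_of_prod hτ h)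
  · have hprod : ∏ e, τ e =
        (-1 : ℝ) ^ (Finset.univ.filter (fun e : Fin n ⊕ Fin n => τ e = -1)).card := by
      rw [← Finset.prod_filter_mul_prod_filter_not Finset.univ
        (fun e : Fin n ⊕ Fin n => τ e = -1) τ]
      have h1 : ∏ e ∈ Finset.univ.filter (fun e : Fin n ⊕ Fin n => τ e = -1), τ e =
          (-1 : ℝ) ^ (Finset.univ.filter (fun e : Fin n ⊕ Fin n => τ e = -1)).card := by
        rw [Finset.prod_congr rfl (fun e he => (Finset.mem_filter.mp he).2),
          Finset.prod_const]
      have h2 : ∏ e ∈ Finset.univ.filter (fun e : Fin n ⊕ Fin n => ¬ τ e = -1), τ e = 1 := by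
        apply Finset.prod_eq_one
        intro e he
        rcases hτ e with h | h
        · exact h
        · exact absurd h (Finset.mem_filter.mp he).2
      rw [h1, h2, mul_one]
    rw [hprod]
    exact neg_one_pow_eq_one_iff_even (by norm_num)

end Stmt15
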